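/- Let Ω ⊆ ℝ² be open, let u, φ : ℝ² → ℝ be differentiable on Ω with ∇φ(i) ≠ 0 for all i ∈ Ω, and define the contour flow field F(i) = J(∇φ(i)) / ‖∇φ(i)‖, where J(v₁,v₂) = (-v₂,v₁) is rotation by π/2. Assume the contour flow constraint ⟨∇u(i), F(i)⟩ = 0 holds for every i ∈ Ω. Let ψ : ℝ → Ω be a differentiable curve that is tangent to the level sets of u and along which ∇u does not vanish: for all t, ⟨∇u(ψ(t)), ψ′(t)⟩ = 0 and ∇u(ψ(t)) ≠ 0. Then (φ ∘ ψ)′(t) = 0 for all t; in particular φ is constant along ψ. -/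

import Mathlib

open scoped RealInnerProductSpace

/-- Rotation of the plane by `π/2`: `J(v₁, v₂) = (-v₂, v₁)`. -/
noncomputable def Jrot (v : EuclideanSpace ℝ (Fin 2)) : EuclideanSpace ℝ (Fin 2) :=
  WithLp.toLp 2 ![-(v 1), v 0]

lemma collinear_of_inner_Jrot (a b : EuclideanSpace ℝ (Fin 2)) (hb : b ≠ 0)
    (h : ⟪a, Jrot b⟫ = 0) : ∃ c : ℝ, a = c • b := by
  have h' : a 0 * (-(b 1)) + a 1 * (b 0) = 0 := by
    have := h
    simp [PiLp.inner_apply, Fin.sum_univ_two, Jrot] at this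
    linarith
  have hb' : b 0 ≠ 0 ∨ b 1 ≠ 0 := by
    by_contra hc
    push_neg at hc
    apply hb
    ext i
    fin_cases i <;> simp [hc.1, hc.2]
  rcases hb' with h0 | h1
  · refine ⟨a 0 / b 0, ?_⟩
    ext i
    fin_cases i <;> simp [PiLp.smul_apply, smul_eq_mul] <;> field_simp <;> nlinarith
  · refine ⟨a 1 / b 1, ?_⟩
    ext i
    fin_cases i <;> simp [PiLp.smul_apply, smul_eq_mul] <;> field_simp <;> nlinarith

theorem contour_flow_constraint_implies_phi_constant_along_level_curves
    (Ω : Set (EuclideanSpace ℝ (Fin 2))) (hΩ : IsOpen Ω)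
    (u φ : EuclideanSpace ℝ (Fin 2) → ℝ)
    (hu : ∀ i ∈ Ω, DifferentiableAt ℝ u i)
    (hφ : ∀ i ∈ Ω, DifferentiableAt ℝ φ i)
    (hgrad : ∀ i ∈ Ω, gradient φ i ≠ 0)
    (F : EuclideanSpace ℝ (Fin 2) → EuclideanSpace ℝ (Fin 2))
    (hF : ∀ i ∈ Ω, F i = ‖gradient φ i‖⁻¹ • Jrot (gradient φ i))
    -- the contour flow constraint holds on `Ω`
    (hCF : ∀ i ∈ Ω, ⟪gradient u i, F i⟫ = 0)
    -- `ψ` is a differentiable curve in `Ω`, tangent to the level sets of `u`,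
    -- along which `∇u` does not vanish
    (ψ : ℝ → EuclideanSpace ℝ (Fin 2))
    (hψΩ : ∀ t : ℝ, ψ t ∈ Ω)
    (hψd : ∀ t : ℝ, DifferentiableAt ℝ ψ t)
    (htan : ∀ t : ℝ, ⟪gradient u (ψ t), deriv ψ t⟫ = 0)
    (hne : ∀ t : ℝ, gradient u (ψ t) ≠ 0) :
    (∀ t : ℝ, deriv (φ ∘ ψ) t = 0) ∧ ∀ s t : ℝ, φ (ψ s) = φ (ψ t) := by
  have key : ∀ t : ℝ, deriv (φ ∘ ψ) t = 0 := by
    intro t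
    set x := ψ t with hx
    have hxΩ := hψΩ t
    -- inner product of ∇u with Jrot ∇φ vanishes
    have h1 : ⟪gradient u x, Jrot (gradient φ x)⟫ = 0 := by
      have := hCF x hxΩ
      rw [hF x hxΩ, real_inner_smul_right] at this
      have hn : ‖gradient φ x‖⁻¹ ≠ 0 := by
        simpa using (norm_ne_zero_iff.mpr (hgrad x hxΩ))
      exact (mul_eq_zero.mp this).resolve_left hn
    obtain ⟨c, hc⟩ := collinear_of_inner_Jrot _ _ (hgrad x hxΩ) h1
    have hc0 : c ≠ 0 := by
      intro h
      apply hne t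
      rw [← hx, hc, h, zero_smul]
    have h2 : ⟪gradient φ x, deriv ψ t⟫ = 0 := by
      have := htan t
      rw [← hx, hc, real_inner_smul_left] at this
      exact (mul_eq_zero.mp this).resolve_left hc0
    -- chain rule
    have hg : HasGradientAt φ (gradient φ x) x := (hφ x hxΩ).hasGradientAt
    have hfd : HasFDerivAt φ (InnerProductSpace.toDual ℝ _ (gradient φ x)) x :=
      hg.hasFDerivAt
    have hcomp : HasDerivAt (φ ∘ ψ)
        (InnerProductSpace.toDual ℝ _ (gradient φ x) (deriv ψ t)) t :=
      hfd.comp_hasDerivAt t (hψd t).hasDerivAt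
    rw [hcomp.deriv]
    simpa [InnerProductSpace.toDual_apply_apply] using h2
  refine ⟨key, ?_⟩
  have hdiff : Differentiable ℝ (φ ∘ ψ) := fun t =>
    (hφ (ψ t) (hψΩ t)).comp t (hψd t)
  intro s t
  exact is_const_of_deriv_eq_zero hdiff key s t
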